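/- arXiv:1902.08500 — 4 statements merged into one kernel-verified Lean document; each statement's English description precedes it below -/
import Mathlib

section
/- The function Φ(θ) = a²b²(e^{-θ} - 1 + θ)/θ³ + σ², defined for θ > 0 (with a ≠ 0, b ≠ 0 real constants), is strictly decreasing on (0, ∞). -/
open Real Set

private lemma hD (θ : ℝ) : HasDerivAt (fun t : ℝ => 3 - 2*t - (3+t)*Real.exp (-t))
    (-2 + (2+θ)*Real.exp (-θ)) θ := by
  have he : HasDerivAt (fun t : ℝ => Real.exp (-t)) (-Real.exp (-θ)) θ := by
    simpa [Function.comp_def] using (Real.hasDerivAt_exp (-θ)).comp θ (hasDerivAt_neg θ)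
  have h1 : HasDerivAt (fun t : ℝ => (3+t)*Real.exp (-t))
      (1 * Real.exp (-θ) + (3+θ) * (-Real.exp (-θ))) θ := by
    have := ((hasDerivAt_const θ (3:ℝ)).add (hasDerivAt_id θ)).mul he
    simpa [Pi.add_def, Pi.mul_def] using this
  have h2 : HasDerivAt (fun t : ℝ => 3 - 2*t) (-2) θ := by
    simpa using ((hasDerivAt_id θ).const_mul (2:ℝ)).const_sub 3
  have : HasDerivAt (fun t : ℝ => 3 - 2*t - (3+t)*Real.exp (-t))
      (-2 - (1 * Real.exp (-θ) + (3+θ) * (-Real.exp (-θ)))) θ := h2.sub h1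
  convert this using 1
  ring

private lemma key (θ : ℝ) (hθ : 0 < θ) : 3 - 2*θ - (3+θ)*Real.exp (-θ) < 0 := by
  have hanti : StrictAntiOn (fun t : ℝ => 3 - 2*t - (3+t)*Real.exp (-t)) (Set.Ici 0) := by
    apply strictAntiOn_of_deriv_neg (convex_Ici 0)
    · exact Continuous.continuousOn (by continuity)
    · intro x hx
      rw [interior_Ici] at hx
      rw [(hD x).deriv]
      have hx0 : (0:ℝ) < x := hx
      have h1 : 1 + x < Real.exp x := by
        have := Real.add_one_lt_exp (ne_of_gt hx0)
        linarith
      have h2 : Real.exp (-x) * Real.exp x = 1 := by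
        rw [← Real.exp_add]; simp
      have h3 : 0 < Real.exp (-x) := Real.exp_pos _
      nlinarith [mul_pos h3 hx0]
  have h0 : (fun t : ℝ => 3 - 2*t - (3+t)*Real.exp (-t)) 0 = 0 := by simp
  have := hanti (Set.self_mem_Ici) (Set.mem_Ici.mpr hθ.le) hθ
  rw [h0] at this
  exact this

/-- The function `Φ(θ) = a²b²(e^{-θ} - 1 + θ)/θ³ + σ²` is strictly decreasing on `(0, ∞)`. -/
theorem phi_strictAntiOn (a b σ : ℝ) (ha : a ≠ 0) (hb : b ≠ 0) :
    StrictAntiOn (fun θ : ℝ => a ^ 2 * b ^ 2 * (Real.exp (-θ) - 1 + θ) / θ ^ 3 + σ ^ 2)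
      (Set.Ioi (0 : ℝ)) := by
  have hderiv : ∀ θ : ℝ, 0 < θ → HasDerivAt
      (fun θ : ℝ => a ^ 2 * b ^ 2 * (Real.exp (-θ) - 1 + θ) / θ ^ 3 + σ ^ 2)
      ((a^2*b^2*(-Real.exp (-θ) + 1) * θ^3 -
        a^2*b^2*(Real.exp (-θ) - 1 + θ) * ((3:ℕ) * θ^2)) / (θ^3)^2) θ := by
    intro θ hθ
    have he : HasDerivAt (fun t : ℝ => Real.exp (-t)) (-Real.exp (-θ)) θ := by
      simpa [Function.comp_def] using (Real.hasDerivAt_exp (-θ)).comp θ (hasDerivAt_neg θ)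
    have hu : HasDerivAt (fun t : ℝ => a^2*b^2*(Real.exp (-t) - 1 + t))
        (a^2*b^2*(-Real.exp (-θ) + 1)) θ :=
      ((he.sub_const 1).add (hasDerivAt_id θ)).const_mul _
    have hv : HasDerivAt (fun t : ℝ => t^3) ((3:ℕ) * θ^2) θ := by
      simpa using hasDerivAt_pow 3 θ
    exact ((hu.div hv (pow_ne_zero 3 (ne_of_gt hθ))).add_const _)
  apply strictAntiOn_of_deriv_neg (convex_Ioi 0)
  · exact fun x hx => ((hderiv x hx).differentiableAt).continuousAt.continuousWithinAt
  · intro x hx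
    rw [interior_Ioi] at hx
    rw [(hderiv x hx).deriv]
    apply div_neg_of_neg_of_pos
    · have hne : a^2*b^2*(-Real.exp (-x) + 1) * x^3 -
          a^2*b^2*(Real.exp (-x) - 1 + x) * ((3:ℕ) * x^2)
          = a^2*b^2 * x^2 * (3 - 2*x - (3+x)*Real.exp (-x)) := by
        push_cast; ring
      rw [hne]
      apply mul_neg_of_pos_of_neg
      · have hx' : (0:ℝ) < x := hx
        positivity
      · exact key x hx
    · have hx' : (0:ℝ) < x := hx
      positivity
end

section
/- The function φ(x) = 2(e^{-x} - 1 + x)/(e^{-x} - 1)² is strictly increasing on (0, ∞), with φ(x) → 1 as x → 0⁺ and φ(x) → ∞ as x → ∞. -/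
open Filter Real

-- derivative of exp(-x)
lemma hasDerivAt_exp_neg (x : ℝ) : HasDerivAt (fun y : ℝ => Real.exp (-y)) (-Real.exp (-x)) x := by
  simpa [Function.comp_def] using (Real.hasDerivAt_exp (-x)).comp x (hasDerivAt_neg x)

lemma num_hasDerivAt (x : ℝ) :
    HasDerivAt (fun y : ℝ => 2 * (Real.exp (-y) - 1 + y)) (2 * (-Real.exp (-x) + 1)) x := by
  exact (((hasDerivAt_exp_neg x).sub_const 1).add (hasDerivAt_id x)).const_mul 2

lemma den_hasDerivAt (x : ℝ) :
    HasDerivAt (fun y : ℝ => (Real.exp (-y) - 1) ^ 2)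
      (2 * (Real.exp (-x) - 1) ^ 1 * (-Real.exp (-x))) x := by
  simpa using ((hasDerivAt_exp_neg x).sub_const 1).fun_pow 2

lemma exp_neg_lt_one {x : ℝ} (hx : 0 < x) : Real.exp (-x) < 1 := by
  have := Real.exp_lt_exp.mpr (show -x < 0 by linarith)
  simpa using this

lemma key_ineq {x : ℝ} (hx : 0 < x) :
    0 < 2 - 2 * Real.exp (-x) ^ 2 - 4 * x * Real.exp (-x) := by
  have h1 : x < Real.sinh x := Real.self_lt_sinh_iff.mpr hx
  rw [Real.sinh_eq] at h1
  have he : (0:ℝ) < Real.exp (-x) := Real.exp_pos _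
  have hmul : Real.exp x * Real.exp (-x) = 1 := by rw [← Real.exp_add]; simp
  nlinarith [mul_lt_mul_of_pos_right (show 2 * x < Real.exp x - Real.exp (-x) by linarith) he]

lemma phi_hasDerivAt {x : ℝ} (hx : 0 < x) :
    HasDerivAt (fun y : ℝ => 2 * (Real.exp (-y) - 1 + y) / (Real.exp (-y) - 1) ^ 2)
      ((2 * (-Real.exp (-x) + 1) * (Real.exp (-x) - 1) ^ 2 -
        2 * (Real.exp (-x) - 1 + x) * (2 * (Real.exp (-x) - 1) ^ 1 * (-Real.exp (-x)))) /
        ((Real.exp (-x) - 1) ^ 2) ^ 2) x := by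
  have hne : (Real.exp (-x) - 1) ^ 2 ≠ 0 :=
    pow_ne_zero 2 (by have := exp_neg_lt_one hx; linarith)
  exact (num_hasDerivAt x).div (den_hasDerivAt x) hne

/-- The function `φ(x) = 2(e^{-x} - 1 + x)/(e^{-x} - 1)²` is strictly increasing on `(0,∞)`,
tends to `1` as `x → 0⁺` and tends to `∞` as `x → ∞`. -/
theorem phi_ratio_strictMono_and_limits :
    StrictMonoOn (fun x : ℝ => 2 * (Real.exp (-x) - 1 + x) / (Real.exp (-x) - 1) ^ 2)
        (Set.Ioi (0 : ℝ)) ∧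
      Tendsto (fun x : ℝ => 2 * (Real.exp (-x) - 1 + x) / (Real.exp (-x) - 1) ^ 2)
        (nhdsWithin 0 (Set.Ioi (0 : ℝ))) (nhds 1) ∧
      Tendsto (fun x : ℝ => 2 * (Real.exp (-x) - 1 + x) / (Real.exp (-x) - 1) ^ 2)
        atTop atTop := by
  have hden_ne : ∀ x ∈ Set.Ioi (0:ℝ), (Real.exp (-x) - 1) ^ 2 ≠ 0 := fun x hx =>
    pow_ne_zero 2 (by have := exp_neg_lt_one hx; linarith)
  refine ⟨?_, ?_, ?_⟩
  · -- strict mono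
    apply strictMonoOn_of_deriv_pos (convex_Ioi 0)
    · exact ContinuousOn.div (by fun_prop) (by fun_prop) hden_ne
    · intro x hx
      rw [interior_Ioi] at hx
      rw [(phi_hasDerivAt hx).deriv]
      apply div_pos
      · have h := key_ineq hx
        have h1 : Real.exp (-x) < 1 := exp_neg_lt_one hx
        nlinarith [mul_pos (show (0:ℝ) < 1 - Real.exp (-x) by linarith) h]
      · have := hden_ne x hx
        positivity
  · -- limit at 0+
    apply HasDerivAt.lhopital_zero_nhdsGT
      (f' := fun x => 2 * (-Real.exp (-x) + 1))
      (g' := fun x => 2 * (Real.exp (-x) - 1) ^ 1 * (-Real.exp (-x)))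
    · exact Eventually.of_forall fun x => num_hasDerivAt x
    · exact Eventually.of_forall fun x => den_hasDerivAt x
    · filter_upwards [self_mem_nhdsWithin] with x hx
      have h1 : Real.exp (-x) < 1 := exp_neg_lt_one hx
      have h2 : (0:ℝ) < Real.exp (-x) := Real.exp_pos _
      intro h
      nlinarith
    · have : Tendsto (fun x : ℝ => 2 * (Real.exp (-x) - 1 + x)) (nhds 0) (nhds 0) := by
        have : ContinuousAt (fun x : ℝ => 2 * (Real.exp (-x) - 1 + x)) 0 := by fun_prop
        simpa using this.tendsto
      exact this.mono_left nhdsWithin_le_nhds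
    · have : Tendsto (fun x : ℝ => (Real.exp (-x) - 1) ^ 2) (nhds 0) (nhds 0) := by
        have : ContinuousAt (fun x : ℝ => (Real.exp (-x) - 1) ^ 2) 0 := by fun_prop
        simpa using this.tendsto
      exact this.mono_left nhdsWithin_le_nhds
    · -- f'/g' = exp x → 1
      have h : Tendsto (fun x : ℝ => Real.exp x) (nhdsWithin 0 (Set.Ioi 0)) (nhds 1) := by
        have := (Real.continuous_exp.tendsto 0)
        simpa using this.mono_left nhdsWithin_le_nhds
      apply h.congr'
      filter_upwards [self_mem_nhdsWithin] with x hx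
      have h1 : Real.exp (-x) < 1 := exp_neg_lt_one hx
      have h2 : (0:ℝ) < Real.exp (-x) := Real.exp_pos _
      have hmul : Real.exp x * Real.exp (-x) = 1 := by rw [← Real.exp_add]; simp
      have h3 : Real.exp (-x) - 1 ≠ 0 := by linarith
      have h4 : Real.exp (-x) ≠ 0 := ne_of_gt h2
      rw [pow_one]
      field_simp
      linear_combination (Real.exp (-x) - 1) * hmul
  · -- limit at infinity
    have hnum : Tendsto (fun x : ℝ => 2 * (Real.exp (-x) - 1 + x)) atTop atTop := by
      have h1 : Tendsto (fun x : ℝ => 2 * (Real.exp (-x) - 1)) atTop (nhds (2 * (0 - 1))) := by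
        exact (Real.tendsto_exp_neg_atTop_nhds_zero.sub_const 1).const_mul 2
      have h2 : Tendsto (fun x : ℝ => 2 * x) atTop atTop :=
        tendsto_id.const_mul_atTop (by norm_num)
      have := h1.add_atTop h2
      refine this.congr fun x => by ring
    have hden : Tendsto (fun x : ℝ => ((Real.exp (-x) - 1) ^ 2)⁻¹) atTop (nhds 1) := by
      have h1 : Tendsto (fun x : ℝ => (Real.exp (-x) - 1) ^ 2) atTop (nhds 1) := by
        have := (Real.tendsto_exp_neg_atTop_nhds_zero.sub_const 1).pow 2
        norm_num at this; exact this
      simpa using h1.inv₀ (by norm_num)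
    have := hnum.atTop_mul_pos (by norm_num) hden
    exact this.congr fun x => (div_eq_mul_inv _ _).symm
end

section
/- Any solution γ(θ, t) of the Riccati equation ∂γ/∂t = −2θγ − γ²a²/σ² + b² with initial value γ(θ,0) = d² ≥ 0 converges to the stationary value γ(θ) exponentially fast: |γ(θ,t) − γ(θ)| ≤ C e^{−2r(θ)t} for some constant C > 0, where r(θ) = √(θ² + a²b²/σ²). -/
/-- Any solution of the Riccati equation `∂γ/∂t = −2θγ − γ²a²/σ² + b²` starting from
`γ(0) = d² ≥ 0` converges exponentially fast to the stationary value `γ(θ)`: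
`|γ(t) − γ(θ)| ≤ C e^{−2r(θ)t}` with `r(θ) = √(θ² + a²b²/σ²)`. -/
theorem riccati_exponential_convergence (a b σ θ d2 : ℝ) (ha : a ≠ 0) (hb : b ≠ 0)
    (hσ : σ ≠ 0) (hθ : 0 < θ) (hd2 : 0 ≤ d2)
    (γ : ℝ → ℝ) (hγ0 : γ 0 = d2)
    (hode : ∀ t : ℝ, 0 ≤ t →
      HasDerivAt γ (-2 * θ * γ t - (γ t) ^ 2 * a ^ 2 / σ ^ 2 + b ^ 2) t) :
    ∃ C > 0, ∀ t : ℝ, 0 ≤ t →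
      |γ t - θ * σ ^ 2 / a ^ 2 * (Real.sqrt (1 + a ^ 2 * b ^ 2 / (θ ^ 2 * σ ^ 2)) - 1)| ≤
        C * Real.exp (-2 * Real.sqrt (θ ^ 2 + a ^ 2 * b ^ 2 / σ ^ 2) * t) := by
  have ha2 : (0:ℝ) < a ^ 2 := by positivity
  have hσ2 : (0:ℝ) < σ ^ 2 := by positivity
  have hb2 : (0:ℝ) < b ^ 2 := by positivity
  set k : ℝ := a ^ 2 / σ ^ 2 with hk
  have hk0 : 0 < k := div_pos ha2 hσ2
  set r : ℝ := Real.sqrt (θ ^ 2 + a ^ 2 * b ^ 2 / σ ^ 2) with hrdef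
  have hr2 : r ^ 2 = θ ^ 2 + k * b ^ 2 := by
    rw [hrdef, Real.sq_sqrt (by positivity)]; rw [hk]; ring
  have hr0 : 0 ≤ r := Real.sqrt_nonneg _
  have hθr : θ < r := by
    have h1 : θ ^ 2 < r ^ 2 := by nlinarith
    exact lt_of_pow_lt_pow_left₀ 2 hr0 h1
  have hrpos : 0 < r := lt_trans hθ hθr
  set p : ℝ := (r - θ) / k with hpdef
  set q : ℝ := -(r + θ) / k with hqdef
  have hppos : 0 < p := div_pos (by linarith) hk0
  have hqneg : q < 0 := div_neg_of_neg_of_pos (by linarith) hk0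
  have hqp : q < p := lt_trans hqneg hppos
  have hr2s : σ ^ 2 * r ^ 2 = σ ^ 2 * θ ^ 2 + a ^ 2 * b ^ 2 := by
    rw [hr2, hk]; field_simp
  have hfact : ∀ x : ℝ, -2 * θ * x - x ^ 2 * a ^ 2 / σ ^ 2 + b ^ 2
      = -k * (x - p) * (x - q) := by
    intro x
    rw [hpdef, hqdef, hk]
    have hka : a ^ 2 / σ ^ 2 ≠ 0 := ne_of_gt (div_pos ha2 hσ2)
    field_simp
    linear_combination (-(σ ^ 2)) * hr2s
  have hpq : k * (p - q) = 2 * r := by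
    rw [hpdef, hqdef]; field_simp; ring
  -- continuity of γ on [0, ∞)
  have hcont : ∀ t : ℝ, 0 ≤ t → ContinuousAt γ t := fun t ht => (hode t ht).continuousAt
  -- γ stays nonnegative
  have nonneg : ∀ t : ℝ, 0 ≤ t → 0 ≤ γ t := by
    intro t1 ht1
    by_contra hneg
    push_neg at hneg
    have ht1' : 0 < t1 := by
      rcases ht1.lt_or_eq with h | h
      · exact h
      · exfalso; rw [← h, hγ0] at hneg; linarith
    set A : Set ℝ := {t | t ∈ Set.Icc (0:ℝ) t1 ∧ 0 ≤ γ t} with hA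
    have hA0 : (0:ℝ) ∈ A := ⟨⟨le_refl 0, ht1⟩, by rw [hγ0]; exact hd2⟩
    have hAne : A.Nonempty := ⟨0, hA0⟩
    have hAbdd : BddAbove A := ⟨t1, fun x hx => hx.1.2⟩
    have hγcont : ContinuousOn γ (Set.Icc (0:ℝ) t1) := fun s hs =>
      (hcont s hs.1).continuousWithinAt
    have hAclosed : IsClosed A := by
      have : A = Set.Icc (0:ℝ) t1 ∩ γ ⁻¹' Set.Ici 0 := by
        ext x; simp [hA, Set.mem_inter_iff]
      rw [this]
      exact hγcont.preimage_isClosed_of_isClosed isClosed_Icc isClosed_Ici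
    set t0 : ℝ := sSup A with ht0def
    have ht0mem : t0 ∈ A := hAclosed.csSup_mem hAne hAbdd
    have ht00 : 0 ≤ t0 := ht0mem.1.1
    have ht0t1 : t0 ≤ t1 := ht0mem.1.2
    have ht0lt : t0 < t1 := lt_of_le_of_ne ht0t1 (by
      intro h; rw [h] at ht0mem; linarith [ht0mem.2])
    have hbetween : ∀ s : ℝ, t0 < s → s ≤ t1 → γ s < 0 := by
      intro s hs1 hs2
      by_contra hpos
      push_neg at hpos
      have : s ∈ A := ⟨⟨by linarith, hs2⟩, hpos⟩
      have := le_csSup hAbdd this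
      linarith
    have hγt0le : γ t0 ≤ 0 := by
      have htend : Filter.Tendsto γ (nhdsWithin t0 (Set.Ioi t0)) (nhds (γ t0)) :=
        ((hcont t0 ht00).continuousWithinAt)
      refine le_of_tendsto htend ?_
      filter_upwards [Ioo_mem_nhdsGT_of_mem (Set.mem_Ico.mpr ⟨le_refl t0, ht0lt⟩)] with s hs
      exact le_of_lt (hbetween s hs.1 (le_of_lt hs.2))
    have hγt0 : γ t0 = 0 := le_antisymm hγt0le ht0mem.2
    have hderiv : HasDerivAt γ (b ^ 2) t0 := by
      have := hode t0 ht00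
      rw [hγt0] at this
      simpa using this
    have hslope : Filter.Tendsto (slope γ t0) (nhdsWithin t0 {t0}ᶜ) (nhds (b ^ 2)) :=
      hasDerivAt_iff_tendsto_slope.mp hderiv
    have hslope' : Filter.Tendsto (slope γ t0) (nhdsWithin t0 (Set.Ioi t0)) (nhds (b ^ 2)) :=
      hslope.mono_left (nhdsWithin_mono t0 (fun x hx => ne_of_gt hx))
    have hev : ∀ᶠ s in nhdsWithin t0 (Set.Ioi t0), 0 < slope γ t0 s :=
      hslope'.eventually (eventually_gt_nhds hb2)
    have hev2 : ∀ᶠ s in nhdsWithin t0 (Set.Ioi t0), s ∈ Set.Ioo t0 t1 :=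
      Ioo_mem_nhdsGT_of_mem (Set.mem_Ico.mpr ⟨le_refl t0, ht0lt⟩)
    obtain ⟨s, hs1, hs2⟩ := (hev.and hev2).exists
    have hslp : slope γ t0 s = (γ s - γ t0) / (s - t0) := slope_def_field γ t0 s
    rw [hslp, hγt0, sub_zero] at hs1
    have hst : 0 < s - t0 := by linarith [hs2.1]
    have : 0 < γ s := by
      have := mul_pos hs1 hst
      rwa [div_mul_cancel₀ _ (ne_of_gt hst)] at this
    linarith [hbetween s hs2.1 (le_of_lt hs2.2)]
  have hγq : ∀ t : ℝ, 0 ≤ t → 0 < γ t - q := fun t ht => by linarith [nonneg t ht]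
  -- the transformed function v is constant
  set u0 : ℝ := (d2 - p) / (d2 - q) with hu0def
  have hd2q : 0 < d2 - q := by linarith
  have hu0lt : |u0| < 1 := by
    rw [hu0def, abs_div, abs_of_pos hd2q, div_lt_one hd2q, abs_lt]
    constructor
    · have : q + p < 2 * d2 := by
        have : q + p = -2 * θ / k := by rw [hpdef, hqdef]; field_simp; ring
        have h2 : q + p < 0 := by
          rw [this]
          exact div_neg_of_neg_of_pos (by linarith) hk0
        linarith
      linarith
    · linarith
  set v : ℝ → ℝ := fun t => (γ t - p) / (γ t - q) * Real.exp (2 * r * t) with hvdef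
  have hvd : ∀ t : ℝ, 0 ≤ t → HasDerivAt v 0 t := by
    intro t ht
    have hgq : γ t - q ≠ 0 := ne_of_gt (hγq t ht)
    have h1 : HasDerivAt (fun s => γ s - p)
        (-2 * θ * γ t - (γ t) ^ 2 * a ^ 2 / σ ^ 2 + b ^ 2) t := (hode t ht).sub_const p
    have h2 : HasDerivAt (fun s => γ s - q)
        (-2 * θ * γ t - (γ t) ^ 2 * a ^ 2 / σ ^ 2 + b ^ 2) t := (hode t ht).sub_const q
    have h3 := h1.div h2 hgq
    have h4 : HasDerivAt (fun s : ℝ => Real.exp (2 * r * s))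
        (Real.exp (2 * r * t) * (2 * r)) t := by
      have hid : HasDerivAt (fun s : ℝ => 2 * r * s) (2 * r) t := by
        simpa using (hasDerivAt_id t).const_mul (2 * r)
      exact hid.exp
    have h5 := h3.mul h4
    convert h5 using 1
    · rfl
    · rfl
    · rfl
    rw [hfact (γ t), ← hpq]
    simp only [Pi.div_apply]
    field_simp
    ring
  have hvconst : ∀ t : ℝ, 0 ≤ t → v t = v 0 := by
    intro t ht
    rcases eq_or_lt_of_le ht with h | h
    · rw [← h]
    · have hcontv : ContinuousOn v (Set.Icc 0 t) := fun s hs =>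
        ((hvd s hs.1).continuousAt).continuousWithinAt
      have hdv : ∀ s ∈ Set.Ico (0:ℝ) t, HasDerivWithinAt v 0 (Set.Ici s) s := fun s hs =>
        (hvd s hs.1).hasDerivWithinAt
      exact constant_of_has_deriv_right_zero hcontv hdv t (Set.mem_Icc.mpr ⟨ht, le_refl t⟩)
  have hv0 : v 0 = u0 := by
    rw [hvdef]; simp [hγ0, hu0def]
  have hu : ∀ t : ℝ, 0 ≤ t → (γ t - p) / (γ t - q) = u0 * Real.exp (-(2 * r * t)) := by
    intro t ht
    have h := hvconst t ht
    rw [hv0] at h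
    have hvt : v t = (γ t - p) / (γ t - q) * Real.exp (2 * r * t) := rfl
    rw [hvt] at h
    rw [← h, mul_assoc, ← Real.exp_add]
    simp
  -- final bound
  refine ⟨max 1 ((p - q) * |u0| / (1 - |u0|)), lt_of_lt_of_le one_pos (le_max_left _ _), ?_⟩
  intro t ht
  have hptarget : θ * σ ^ 2 / a ^ 2 * (Real.sqrt (1 + a ^ 2 * b ^ 2 / (θ ^ 2 * σ ^ 2)) - 1)
      = p := by
    have hsq : 1 + a ^ 2 * b ^ 2 / (θ ^ 2 * σ ^ 2) = (r / θ) ^ 2 := by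
      rw [div_pow]
      field_simp
      linear_combination (-1) * hr2s
    rw [hsq, Real.sqrt_sq (by positivity), hpdef, hk]
    field_simp
  rw [hptarget]
  have hgq := hγq t ht
  set ut : ℝ := (γ t - p) / (γ t - q) with hutdef
  have huval : ut = u0 * Real.exp (-(2 * r * t)) := hu t ht
  have hexple : Real.exp (-(2 * r * t)) ≤ 1 := by
    rw [Real.exp_le_one_iff]
    have : 0 ≤ 2 * r * t := by positivity
    linarith
  have hexppos : 0 < Real.exp (-(2 * r * t)) := Real.exp_pos _
  have hutabs : |ut| = |u0| * Real.exp (-(2 * r * t)) := by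
    rw [huval, abs_mul, abs_of_pos hexppos]
  have hutlt : |ut| < 1 := by
    rw [hutabs]
    calc |u0| * Real.exp (-(2 * r * t)) ≤ |u0| * 1 := by
          exact mul_le_mul_of_nonneg_left hexple (abs_nonneg _)
      _ = |u0| := mul_one _
      _ < 1 := hu0lt
  have hutlt1 : ut < 1 := lt_of_le_of_lt (le_abs_self _) hutlt
  have heq1 : γ t - p = ut * (γ t - q) := by
    rw [hutdef, div_mul_cancel₀ _ (ne_of_gt hgq)]
  have heq2 : (1 - ut) * (γ t - q) = p - q := by
    have : (1 - ut) * (γ t - q) = (γ t - q) - ut * (γ t - q) := by ring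
    rw [this, ← heq1]; ring
  have h1ut : 0 < 1 - ut := by linarith
  have hgqval : γ t - q = (p - q) / (1 - ut) := by
    rw [← heq2, mul_div_cancel_left₀ _ (ne_of_gt h1ut)]
  have hbound1 : 1 - |u0| ≤ 1 - ut := by
    have : ut ≤ |ut| := le_abs_self _
    have h2 : |ut| ≤ |u0| := by
      rw [hutabs]
      calc |u0| * Real.exp (-(2 * r * t)) ≤ |u0| * 1 :=
            mul_le_mul_of_nonneg_left hexple (abs_nonneg _)
        _ = |u0| := mul_one _
    linarith
  have h1u0 : 0 < 1 - |u0| := by linarith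
  have hfinal : |γ t - p| ≤ (p - q) * |u0| / (1 - |u0|) * Real.exp (-(2 * r * t)) := by
    rw [heq1, abs_mul, abs_of_pos hgq, hgqval, hutabs]
    have hrw : |u0| * Real.exp (-(2 * r * t)) * ((p - q) / (1 - ut))
        = |u0| * Real.exp (-(2 * r * t)) * (p - q) / (1 - ut) := by ring
    have hrw2 : (p - q) * |u0| / (1 - |u0|) * Real.exp (-(2 * r * t))
        = (p - q) * |u0| * Real.exp (-(2 * r * t)) / (1 - |u0|) := by ring
    rw [hrw, hrw2, div_le_div_iff₀ h1ut h1u0]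
    have hpq0 : 0 ≤ p - q := by linarith
    have hc : 0 ≤ |u0| * Real.exp (-(2 * r * t)) * (p - q) :=
      mul_nonneg (mul_nonneg (abs_nonneg _) hexppos.le) hpq0
    have key := mul_le_mul_of_nonneg_left hbound1 hc
    exact le_of_le_of_eq key (by ring)
  calc |γ t - p| ≤ (p - q) * |u0| / (1 - |u0|) * Real.exp (-(2 * r * t)) := hfinal
    _ ≤ max 1 ((p - q) * |u0| / (1 - |u0|)) * Real.exp (-2 * r * t) := by
        have : -(2 * r * t) = -2 * r * t := by ring
        rw [← this]
        exact mul_le_mul_of_nonneg_right (le_max_right _ _) hexppos.le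
end

section
/- The Fisher information I(θ) = 1/(2θ) − 2ṙ(θ)/(r(θ)+θ) + ṙ(θ)²/(2r(θ)), where r(θ) = √(θ² + c) with c = b²a²/σ² > 0 and ṙ(θ) = θ/r(θ), is strictly positive for every θ > 0. -/
/-- The Fisher information `I(θ) = 1/(2θ) − 2ṙ(θ)/(r(θ)+θ) + ṙ(θ)²/(2r(θ))`, where
`r(θ) = √(θ² + c)` with `c > 0` and `ṙ(θ) = θ/r(θ)`, is strictly positive for `θ > 0`. -/
theorem fisher_information_pos (c θ : ℝ) (hc : 0 < c) (hθ : 0 < θ) :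
    0 < 1 / (2 * θ) -
        2 * (θ / Real.sqrt (θ ^ 2 + c)) / (Real.sqrt (θ ^ 2 + c) + θ) +
        (θ / Real.sqrt (θ ^ 2 + c)) ^ 2 / (2 * Real.sqrt (θ ^ 2 + c)) := by
  set r := Real.sqrt (θ ^ 2 + c) with hrdef
  have hpos : (0:ℝ) < θ ^ 2 + c := by positivity
  have hr2 : r ^ 2 = θ ^ 2 + c := Real.sq_sqrt hpos.le
  have hrpos : 0 < r := Real.sqrt_pos.mpr hpos
  have hrθ : θ < r := by nlinarith [sq_nonneg (r - θ), sq_nonneg (r + θ)]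
  have key : 2*θ^4 + 2*c*θ^2 - c^2 < r * θ * (2*θ^2 + c) := by
    rcases le_or_gt (2*θ^4 + 2*c*θ^2 - c^2) 0 with h | h
    · have : 0 < r * θ * (2*θ^2 + c) := by positivity
      linarith
    · have hb : (0:ℝ) ≤ r * θ * (2*θ^2 + c) := by positivity
      have hb2 : (r * θ * (2*θ^2 + c))^2 = (θ^2+c)*θ^2*(2*θ^2+c)^2 := by
        linear_combination (θ^2*(2*θ^2+c)^2) * hr2
      have hsq : (2*θ^4 + 2*c*θ^2 - c^2)^2 < (r * θ * (2*θ^2 + c))^2 := by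
        nlinarith [hb2, mul_pos (pow_pos hc 2) h]
      exact lt_of_pow_lt_pow_left₀ 2 hb hsq
  have hsum : 0 < r + θ := by linarith
  have expand : 1 / (2 * θ) - 2 * (θ / r) / (r + θ) + (θ / r) ^ 2 / (2 * r)
      = (r^4 + r^3*θ - 4*θ^2*r^2 + θ^3*r + θ^4) / (2*θ*r^3*(r+θ)) := by
    field_simp
    ring
  rw [expand]
  apply div_pos _ (by positivity)
  nlinarith [key, hr2, sq_nonneg r, mul_pos hrpos hθ]
end
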